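/- arXiv:0911.4540 — 2 statements merged into one kernel-verified Lean document; each statement's English description precedes it below -/
import Mathlib

section
/- For every real x > 0, one has 1/2 + sin(2x)/(4x) − sin²x/x² ≤ 5/8. -/
open Real

lemma cos_mul_le_sin {x : ℝ} (hx : 0 < x) (hxpi : x ≤ π) : x * Real.cos x ≤ Real.sin x := by
  rcases le_or_gt x (π / 2) with h | h
  · rcases lt_or_eq_of_le h with h' | h'
    · have ht := Real.lt_tan hx h'
      have hc : 0 < Real.cos x := Real.cos_pos_of_mem_Ioo ⟨by linarith [Real.pi_pos], h'⟩
      rw [Real.tan_eq_sin_div_cos, lt_div_iff₀ hc] at ht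
      linarith
    · simp [h', Real.cos_pi_div_two]
  · have hc : Real.cos x ≤ 0 := Real.cos_nonpos_of_pi_div_two_le_of_le (le_of_lt h) (by linarith [Real.pi_pos])
    have hs : 0 ≤ Real.sin x := Real.sin_nonneg_of_nonneg_of_le_pi (le_of_lt hx) hxpi
    nlinarith

/-- For every real `x > 0`, one has `1/2 + sin(2x)/(4x) − sin²x/x² ≤ 5/8`. -/
theorem stmt_6 (x : ℝ) (hx : 0 < x) :
    1 / 2 + Real.sin (2 * x) / (4 * x) - Real.sin x ^ 2 / x ^ 2 ≤ 5 / 8 := by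
  rcases le_or_gt x π with hxpi | hxpi
  · have hs : 0 ≤ Real.sin x := Real.sin_nonneg_of_nonneg_of_le_pi (le_of_lt hx) hxpi
    have hkey := cos_mul_le_sin hx hxpi
    rw [Real.sin_two_mul]
    have h1 : Real.sin x * Real.cos x / (2 * x) ≤ Real.sin x ^ 2 / x ^ 2 := by
      rw [div_le_div_iff₀ (by positivity) (by positivity)]
      nlinarith [mul_le_mul_of_nonneg_left hkey (mul_nonneg hs hx.le),
        mul_nonneg (mul_nonneg hs hs) hx.le]
    have h2 : 2 * Real.sin x * Real.cos x / (4 * x) = Real.sin x * Real.cos x / (2 * x) := by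
      ring
    linarith
  · have hpi := Real.pi_gt_three
    have h1 : Real.sin (2 * x) / (4 * x) ≤ 1 / 8 := by
      rw [div_le_div_iff₀ (by positivity) (by norm_num)]
      nlinarith [Real.sin_le_one (2 * x)]
    have h2 : 0 ≤ Real.sin x ^ 2 / x ^ 2 := by positivity
    linarith
end

section
/- Let H be a complex Hilbert space (inner product conjugate-linear in the first argument) and G : H → H a bounded linear operator such that Im⟨G x, x⟩ ≥ 0 for all x ∈ H. Then for every χ ∈ ℂ with Im χ < 0 and every x ∈ H, ‖(I − χG)x‖ ≥ (−Im χ/|χ|)·‖x‖. In particular I − χG is injective and has closed range. -/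
/-- Coercivity from the generalized optical theorem: if `G` is a bounded operator on a complex
Hilbert space with `Im⟨Gx, x⟩ ≥ 0` for all `x`, and `Im χ < 0`, then
`‖(I − χG)x‖ ≥ (−Im χ/|χ|)·‖x‖`; in particular `I − χG` is injective with closed range. -/
theorem stmt_11 {H : Type*} [NormedAddCommGroup H] [InnerProductSpace ℂ H] [CompleteSpace H]
    (G : H →L[ℂ] H) (hG : ∀ x : H, 0 ≤ (inner ℂ (G x) x : ℂ).im)
    (χ : ℂ) (hχ : χ.im < 0) :
    (∀ x : H, (-χ.im / ‖χ‖) * ‖x‖ ≤ ‖(ContinuousLinearMap.id ℂ H - χ • G) x‖) ∧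
    Function.Injective ⇑(ContinuousLinearMap.id ℂ H - χ • G) ∧
    IsClosed (Set.range ⇑(ContinuousLinearMap.id ℂ H - χ • G)) := by
  set B := ContinuousLinearMap.id ℂ H - χ • G with hB
  have hχ0 : χ ≠ 0 := fun h => by simp [h] at hχ
  have habs : 0 < ‖χ‖ := norm_pos_iff.mpr hχ0
  have key : ∀ x : H, (-χ.im / ‖χ‖) * ‖x‖ ≤ ‖B x‖ := by
    intro x
    have hBx : B x = x - χ • G x := by simp [hB]
    set a : ℂ := inner ℂ (G x) x with ha
    set s : ℂ := inner ℂ x x with hs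
    have hs_eq : s = ((‖x‖^2 : ℝ) : ℂ) := by
      simpa [hs] using inner_self_eq_norm_sq_to_K (𝕜 := ℂ) (E := H) x
    have expand : χ * (inner ℂ (B x) x : ℂ) = χ * s - χ * (starRingEnd ℂ) χ * a := by
      rw [hBx, inner_sub_left, inner_smul_left, ← ha, ← hs]
      ring
    have hmc : χ * (starRingEnd ℂ) χ = ((Complex.normSq χ : ℝ) : ℂ) := Complex.mul_conj χ
    have him : (χ * (inner ℂ (B x) x : ℂ)).im ≤ χ.im * ‖x‖^2 := by
      rw [expand, hmc, hs_eq, Complex.sub_im]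
      have h1 : (χ * ((‖x‖^2 : ℝ) : ℂ)).im = χ.im * ‖x‖^2 := by
        simp only [Complex.mul_im, Complex.ofReal_im, Complex.ofReal_re, mul_zero, zero_add]
      have h2 : (((Complex.normSq χ : ℝ) : ℂ) * a).im = Complex.normSq χ * a.im := by
        simp only [Complex.mul_im, Complex.ofReal_im, Complex.ofReal_re, zero_mul, add_zero]
      rw [h1, h2]
      nlinarith [hG x, Complex.normSq_nonneg χ]
    have h3 : -χ.im * ‖x‖^2 ≤ -(χ * (inner ℂ (B x) x : ℂ)).im := by nlinarith [norm_nonneg x]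
    have h4 : -(χ * (inner ℂ (B x) x : ℂ)).im ≤ ‖χ * inner ℂ (B x) x‖ :=
      (neg_le_abs _).trans (Complex.abs_im_le_norm _)
    have h5 : ‖χ * inner ℂ (B x) x‖ ≤ ‖χ‖ * (‖B x‖ * ‖x‖) := by
      rw [norm_mul]
      exact mul_le_mul_of_nonneg_left (norm_inner_le_norm _ _) (norm_nonneg χ)
    have h6 : -χ.im * ‖x‖^2 ≤ ‖χ‖ * (‖B x‖ * ‖x‖) := le_trans h3 (le_trans h4 h5)
    rcases eq_or_ne x 0 with rfl | hx
    · simp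
    · have hxn : 0 < ‖x‖ := norm_pos_iff.mpr hx
      rw [div_mul_eq_mul_div, div_le_iff₀ habs]
      nlinarith
  have halip : AntilipschitzWith ⟨‖χ‖ / (-χ.im),
      div_nonneg (norm_nonneg χ) (by linarith)⟩ B := by
    apply B.antilipschitz_of_bound
    intro x
    have h := mul_le_mul_of_nonneg_right (key x) habs.le
    have h' : -χ.im * ‖x‖ ≤ ‖B x‖ * ‖χ‖ := by
      calc -χ.im * ‖x‖ = -χ.im / ‖χ‖ * ‖x‖ * ‖χ‖ := by field_simp
        _ ≤ _ := h
    show ‖x‖ ≤ ‖χ‖ / -χ.im * ‖B x‖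
    rw [div_mul_eq_mul_div, le_div_iff₀ (by linarith : (0:ℝ) < -χ.im)]
    nlinarith [h']
  exact ⟨key, halip.injective, halip.isClosed_range B.uniformContinuous⟩
end
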